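/- Let L be a real m×n matrix with linearly independent rows, let C = {v in the row space of L : all coordinates of v are nonnegative}, and let F ⊆ C be a finite set such that every element of C is a finite linear combination of elements of F with nonnegative coefficients. Assume that the linear span of C has dimension m. Then the minimum of ‖TL‖₀ over all invertible real m×m matrices T with TL entrywise nonnegative exists and equals the minimum of Σ_{e∈S} ‖e‖₀ over all linearly independent subsets S ⊆ F with |S| = m. -/

import Mathlib

/-- The ℓ0-norm of a vector: the number of nonzero entries. -/
noncomputable def l0Vec {n : ℕ} (v : Fin n → ℝ) : ℕ := Set.ncard {j | v j ≠ 0}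

/-- The ℓ0-norm of a matrix: the number of nonzero entries. -/
noncomputable def l0Mat {m n : ℕ} (A : Matrix (Fin m) (Fin n) ℝ) : ℕ :=
  Set.ncard {p : Fin m × Fin n | A p.1 p.2 ≠ 0}

open Submodule


lemma l0Vec_eq_card {n : ℕ} (v : Fin n → ℝ) :
    l0Vec v = (Finset.univ.filter (fun j => v j ≠ 0)).card := by
  classical
  rw [l0Vec, ← Set.ncard_coe_finset]
  congr 1
  ext j; simp

lemma l0Vec_mono {n : ℕ} {u v : Fin n → ℝ} (h : ∀ j, u j ≠ 0 → v j ≠ 0) :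
    l0Vec u ≤ l0Vec v :=
  Set.ncard_le_ncard (fun j hj => h j hj) (Set.toFinite _)

lemma l0Mat_eq_sum {m n : ℕ} (A : Matrix (Fin m) (Fin n) ℝ) :
    l0Mat A = ∑ i, l0Vec (A i) := by
  classical
  have hset : {p : Fin m × Fin n | A p.1 p.2 ≠ 0}
      = ↑(Finset.univ.filter (fun p : Fin m × Fin n => A p.1 p.2 ≠ 0)) := by
    ext p; simp
  rw [l0Mat, hset, Set.ncard_coe_finset]
  rw [Finset.card_eq_sum_card_fiberwise (f := Prod.fst) (t := Finset.univ) (by simp)]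
  refine Finset.sum_congr rfl fun i _ => ?_
  rw [l0Vec_eq_card]
  apply Finset.card_bij (fun p _ => p.2)
  · intro p hp
    simp only [Finset.mem_filter, Finset.mem_univ, true_and] at hp ⊢
    rw [← hp.2]; exact hp.1
  · intro p hp q hq hpq
    simp only [Finset.mem_filter, Finset.mem_univ, true_and] at hp hq
    exact Prod.ext (hp.2.trans hq.2.symm) hpq
  · intro j hj
    simp only [Finset.mem_filter, Finset.mem_univ, true_and] at hj
    exact ⟨(i, j), by simpa using hj, rfl⟩

open Submodule in

section
variable {V : Type*} [AddCommGroup V] [Module ℝ V]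

lemma mkQ_sum_smul (W : Submodule ℝ V) {k : ℕ} (g : Fin k → ℝ) (v : Fin k → V) :
    ∑ i, g i • W.mkQ (v i) = W.mkQ (∑ i, g i • v i) := by
  simp [map_sum, map_smul]

lemma mkQ_eq_zero_iff (W : Submodule ℝ V) (x : V) : W.mkQ x = 0 ↔ x ∈ W := by
  rw [Submodule.mkQ_apply, Submodule.Quotient.mk_eq_zero]

lemma mkQ_li_mono {k : ℕ} {W W' : Submodule ℝ V} (hWW : W ≤ W') {v : Fin k → V}
    (h : LinearIndependent ℝ (fun i => W'.mkQ (v i))) :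
    LinearIndependent ℝ (fun i => W.mkQ (v i)) := by
  rw [Fintype.linearIndependent_iff] at h ⊢
  intro g hg
  apply h g
  rw [mkQ_sum_smul] at hg ⊢
  exact (mkQ_eq_zero_iff _ _).2 (hWW ((mkQ_eq_zero_iff _ _).1 hg))

lemma transversal : ∀ (k : ℕ) (W : Submodule ℝ V) (r : Fin k → V) (U : Fin k → Set V),
    LinearIndependent ℝ (fun i => W.mkQ (r i)) →
    (∀ i, r i ∈ span ℝ (U i)) →
    ∃ e : Fin k → V, (∀ i, e i ∈ U i) ∧ LinearIndependent ℝ (fun i => W.mkQ (e i))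
  | 0, W, r, U, _, _ => ⟨Fin.elim0, fun i => i.elim0, linearIndependent_empty_type⟩
  | (k+1), W, r, U, hli, hspan => by
    have hcons : (fun i => W.mkQ (r i))
        = Fin.cons (W.mkQ (r 0)) (fun i : Fin k => W.mkQ (r i.succ)) := by
      funext j; refine Fin.cases (by simp) (fun i => by simp) j
    rw [hcons, linearIndependent_fin_cons] at hli
    obtain ⟨htail, h0⟩ := hli
    have hex : ∃ x ∈ U 0, W.mkQ x ∉ span ℝ (Set.range fun i : Fin k => W.mkQ (r i.succ)) := by
      by_contra hcon
      push_neg at hcon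
      apply h0
      have hmap : W.mkQ (r 0) ∈ Submodule.map W.mkQ (span ℝ (U 0)) :=
        Submodule.mem_map_of_mem (hspan 0)
      rw [Submodule.map_span] at hmap
      refine span_le.2 ?_ hmap
      rintro _ ⟨x, hx, rfl⟩
      exact hcon x hx
    obtain ⟨e₀, he₀U, he₀⟩ := hex
    have he₀ne : W.mkQ e₀ ≠ 0 := fun h => he₀ (h ▸ Submodule.zero_mem _)
    set W' : Submodule ℝ V := W ⊔ span ℝ {e₀} with hW'
    have hWle : W ≤ W' := le_sup_left
    have licons : LinearIndependent ℝ
        (Fin.cons (W.mkQ e₀) (fun i : Fin k => W.mkQ (r i.succ)) : Fin (k+1) → _) :=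
      linearIndependent_fin_cons.2 ⟨htail, he₀⟩
    have htail' : LinearIndependent ℝ (fun i : Fin k => W'.mkQ (r i.succ)) := by
      rw [Fintype.linearIndependent_iff]
      intro g hg
      rw [mkQ_sum_smul] at hg
      have hmem : ∑ i, g i • r i.succ ∈ W' := (mkQ_eq_zero_iff _ _).1 hg
      rw [hW', Submodule.mem_sup] at hmem
      obtain ⟨w, hw, z, hz, hwz⟩ := hmem
      obtain ⟨c, rfl⟩ := Submodule.mem_span_singleton.1 hz
      have heq : (fun j : Fin (k+1) => (Fin.cons (-c) g : Fin (k+1) → ℝ) j •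
          (Fin.cons (W.mkQ e₀) (fun i : Fin k => W.mkQ (r i.succ)) : Fin (k+1) → _) j)
          = Fin.cons ((-c) • W.mkQ e₀) (fun i : Fin k => g i • W.mkQ (r i.succ)) := by
        funext j; refine Fin.cases (by simp) (fun i => by simp) j
      have hzero : ∑ j : Fin (k+1), (Fin.cons (-c) g : Fin (k+1) → ℝ) j •
          (Fin.cons (W.mkQ e₀) (fun i : Fin k => W.mkQ (r i.succ)) : Fin (k+1) → _) j = 0 := by
        rw [heq, Fin.sum_cons, mkQ_sum_smul, ← map_smul, ← map_add,
          Submodule.mkQ_apply, Submodule.Quotient.mk_eq_zero]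
        have : (-c) • e₀ + ∑ i, g i • r i.succ = w := by
          rw [← hwz, neg_smul]; abel
        rw [this]; exact hw
      have hall := Fintype.linearIndependent_iff.1 licons _ hzero
      intro i
      simpa using hall i.succ
    obtain ⟨et, hetU, hetli⟩ := transversal k W' (fun i => r i.succ) (fun i => U i.succ)
      htail' (fun i => hspan i.succ)
    have hetW : LinearIndependent ℝ (fun i => W.mkQ (et i)) := mkQ_li_mono hWle hetli
    have hnot : W.mkQ e₀ ∉ span ℝ (Set.range fun i => W.mkQ (et i)) := by
      intro hmem
      rw [mem_span_range_iff_exists_fun] at hmem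
      obtain ⟨c, hc⟩ := hmem
      rw [mkQ_sum_smul] at hc
      have h1 : ∑ i, c i • et i - e₀ ∈ W := by
        refine (mkQ_eq_zero_iff _ _).1 ?_
        rw [map_sub, hc, sub_self]
      have h2 : ∑ i, c i • et i ∈ W' := by
        have heq2 : ∑ i, c i • et i = (∑ i, c i • et i - e₀) + e₀ := by abel
        rw [heq2]
        exact Submodule.add_mem _ (hWle h1)
          (Submodule.mem_sup_right (Submodule.mem_span_singleton_self e₀))
      have h3 : ∀ i, c i = 0 := by
        have hz : W'.mkQ (∑ i, c i • et i) = 0 := (mkQ_eq_zero_iff _ _).2 h2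
        exact Fintype.linearIndependent_iff.1 hetli c (by rw [mkQ_sum_smul]; exact hz)
      have he₀W : e₀ ∈ W := by
        have := Submodule.neg_mem _ h1
        simpa [h3] using this
      exact he₀ne ((mkQ_eq_zero_iff _ _).2 he₀W)
    refine ⟨(Fin.cons e₀ et : Fin (k+1) → V), ?_, ?_⟩
    · intro i
      induction i using Fin.cases with
      | zero => simpa using he₀U
      | succ i => simpa using hetU i
    · have hcons2 : (fun i : Fin (k+1) => W.mkQ ((Fin.cons e₀ et : Fin (k+1) → V) i))
          = Fin.cons (W.mkQ e₀) (fun i => W.mkQ (et i)) := by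
        funext j
        induction j using Fin.cases with
        | zero => simp
        | succ i => simp
      rw [hcons2, linearIndependent_fin_cons]
      exact ⟨hetW, hnot⟩

end

/-- (Correctness of Algorithm 1.) Let `L` be a real `m × n` matrix with
linearly independent rows, let `C = rowspace(L) ∩ (ℝ≥0)ⁿ`, and let `F ⊆ C` be a finite set
such that every element of `C` is a finite nonnegative linear combination of elements of
`F`. Assume the linear span of `C` has dimension `m`. Then the minimum of `‖T * L‖₀` over
all invertible `T` with `T * L` entrywise nonnegative exists and equals the minimum of
`Σ_{e ∈ S} ‖e‖₀` over all linearly independent subsets `S ⊆ F` with `|S| = m`. -/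
theorem min_l0_eq_min_over_generators
    (m n : ℕ) (L : Matrix (Fin m) (Fin n) ℝ) (hL : LinearIndependent ℝ L)
    (F : Finset (Fin n → ℝ))
    (hFC : ∀ v ∈ F, v ∈ Submodule.span ℝ (Set.range L) ∧ ∀ j, 0 ≤ v j)
    (hgen : ∀ v : Fin n → ℝ, v ∈ Submodule.span ℝ (Set.range L) → (∀ j, 0 ≤ v j) →
      ∃ c : (Fin n → ℝ) → ℝ, (∀ e, 0 ≤ c e) ∧ v = ∑ e ∈ F, c e • e)
    (hdim : Module.finrank ℝ
      (Submodule.span ℝ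
        {v : Fin n → ℝ | v ∈ Submodule.span ℝ (Set.range L) ∧ ∀ j, 0 ≤ v j}) = m) :
    ∃ μ : ℕ,
      IsLeast {k : ℕ | ∃ T : Matrix (Fin m) (Fin m) ℝ,
        IsUnit T ∧ (∀ i j, 0 ≤ (T * L) i j) ∧ l0Mat (T * L) = k} μ ∧
      IsLeast {k : ℕ | ∃ S : Finset (Fin n → ℝ), S ⊆ F ∧
        LinearIndependent ℝ (fun x : (S : Set (Fin n → ℝ)) => (x : Fin n → ℝ)) ∧
        S.card = m ∧ ∑ e ∈ S, l0Vec e = k} μ := by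
  classical
  set R : Submodule ℝ (Fin n → ℝ) := Submodule.span ℝ (Set.range L) with hRdef
  have hrow : ∀ (T : Matrix (Fin m) (Fin m) ℝ) (i), (T * L) i = ∑ k, T i k • L k := by
    intro T i; ext j; simp [Matrix.mul_apply, Finset.sum_apply]
  have hLinj : Function.Injective L.vecMulLinear := by
    rw [Matrix.coe_vecMulLinear, Matrix.vecMul_injective_iff]; exact hL
  have hker : LinearMap.ker L.vecMulLinear = ⊥ := LinearMap.ker_eq_bot.2 hLinj
  have hvecrow : ∀ (T : Matrix (Fin m) (Fin m) ℝ) (i), L.vecMulLinear (T i) = (T * L) i := by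
    intro T i; ext j; simp [Matrix.vecMul, Matrix.mul_apply, dotProduct]
  -- Part A : second set is nonempty
  have hRfin : Module.finrank ℝ R = m := by
    simpa using finrank_span_eq_card hL
  have hCR : Submodule.span ℝ {v : Fin n → ℝ | v ∈ R ∧ ∀ j, 0 ≤ v j} ≤ R := by
    rw [Submodule.span_le]; intro v hv; exact hv.1
  have hCspan : Submodule.span ℝ {v : Fin n → ℝ | v ∈ R ∧ ∀ j, 0 ≤ v j} = R :=
    Submodule.eq_of_le_of_finrank_le hCR (by rw [hRfin, hdim])
  have hFspan : Submodule.span ℝ (↑F : Set (Fin n → ℝ)) = R := by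
    apply le_antisymm
    · rw [Submodule.span_le]; intro v hv
      exact (hFC v (by exact_mod_cast hv)).1
    · rw [← hCspan, Submodule.span_le]
      intro v hv
      obtain ⟨c, hc0, hcv⟩ := hgen v hv.1 hv.2
      rw [hcv]
      exact Submodule.sum_mem _ fun e he =>
        Submodule.smul_mem _ _ (Submodule.subset_span (by exact_mod_cast he))
  obtain ⟨b, hbF, hbspan, hbli⟩ := exists_linearIndependent ℝ (↑F : Set (Fin n → ℝ))
  have hbfin : b.Finite := F.finite_toSet.subset hbF
  haveI := hbfin.fintype
  have hbcard : b.toFinset.card = m := by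
    have h1 := finrank_span_set_eq_card hbli
    rw [hbspan, hFspan, hRfin] at h1
    exact h1.symm
  have hS₀coe : (↑b.toFinset : Set (Fin n → ℝ)) = b := Set.coe_toFinset b
  have hS₀sub : b.toFinset ⊆ F := by
    intro x hx
    rw [Set.mem_toFinset] at hx
    exact_mod_cast hbF hx
  have hS₀li : LinearIndependent ℝ
      (fun x : (↑b.toFinset : Set (Fin n → ℝ)) => (x : Fin n → ℝ)) := by
    rw [hS₀coe]; exact hbli
  have h2ne : {k : ℕ | ∃ S : Finset (Fin n → ℝ), S ⊆ F ∧
      LinearIndependent ℝ (fun x : (S : Set (Fin n → ℝ)) => (x : Fin n → ℝ)) ∧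
      S.card = m ∧ ∑ e ∈ S, l0Vec e = k}.Nonempty :=
    ⟨∑ e ∈ b.toFinset, l0Vec e, b.toFinset, hS₀sub, hS₀li, hbcard, rfl⟩
  -- Part B : from an independent S ⊆ F of size m, build T
  have partB : ∀ (S : Finset (Fin n → ℝ)), S ⊆ F →
      LinearIndependent ℝ (fun x : (S : Set (Fin n → ℝ)) => (x : Fin n → ℝ)) →
      S.card = m →
      ∃ T : Matrix (Fin m) (Fin m) ℝ, IsUnit T ∧ (∀ i j, 0 ≤ (T * L) i j) ∧
        l0Mat (T * L) = ∑ e ∈ S, l0Vec e := by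
    intro S hSF hSli hScard
    obtain ⟨ε⟩ : Nonempty (Fin m ≃ {x // x ∈ S}) :=
      ⟨((S.equivFin).trans (finCongr hScard)).symm⟩
    set r : Fin m → (Fin n → ℝ) := fun i => ((ε i : Fin n → ℝ)) with hrdef
    have hrR : ∀ i, r i ∈ R := fun i => (hFC _ (hSF (ε i).2)).1
    choose w hw using fun i => (mem_span_range_iff_exists_fun ℝ).1 (hrR i)
    set T : Matrix (Fin m) (Fin m) ℝ := Matrix.of w with hT
    have hTLrow : ∀ i, (T * L) i = r i := fun i => by rw [hrow]; exact hw i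
    have hrli : LinearIndependent ℝ r := by
      have hinj : Function.Injective
          (fun i => (⟨(ε i : Fin n → ℝ), (ε i).2⟩ : ((S : Set (Fin n → ℝ))))) := by
        intro i j hij
        exact ε.injective (Subtype.ext (congrArg Subtype.val hij))
      exact hSli.comp _ hinj
    have hTrows : LinearIndependent ℝ (fun i => T i) := by
      apply LinearIndependent.of_comp L.vecMulLinear
      have heq2 : (⇑L.vecMulLinear ∘ fun i => T i) = r := by
        funext i; rw [Function.comp_apply, hvecrow, hTLrow]
      rw [heq2]; exact hrli
    have hTunit : IsUnit T := Matrix.linearIndependent_rows_iff_isUnit.1 hTrows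
    refine ⟨T, hTunit, ?_, ?_⟩
    · intro i j
      have := congrFun (hTLrow i) j
      rw [this]
      exact (hFC _ (hSF (ε i).2)).2 j
    · rw [l0Mat_eq_sum]
      calc ∑ i, l0Vec ((T * L) i) = ∑ i, l0Vec (r i) :=
            Finset.sum_congr rfl (fun i _ => by rw [hTLrow])
        _ = ∑ e ∈ S, l0Vec e := by
            apply Finset.sum_bij (fun i _ => ((ε i : Fin n → ℝ)))
            · intro i _; exact (ε i).2
            · intro i _ j _ h; exact ε.injective (Subtype.ext h)
            · intro x hx; exact ⟨ε.symm ⟨x, hx⟩, Finset.mem_univ _, by simp⟩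
            · intro i _; rw [hrdef]
  -- Part C : from T, find S with smaller cost
  have partC : ∀ T : Matrix (Fin m) (Fin m) ℝ, IsUnit T → (∀ i j, 0 ≤ (T * L) i j) →
      ∃ S : Finset (Fin n → ℝ), S ⊆ F ∧
        LinearIndependent ℝ (fun x : (S : Set (Fin n → ℝ)) => (x : Fin n → ℝ)) ∧
        S.card = m ∧ ∑ e ∈ S, l0Vec e ≤ l0Mat (T * L) := by
    intro T hTunit hTnn
    set r : Fin m → (Fin n → ℝ) := fun i => (T * L) i with hrdef
    have hrR : ∀ i, r i ∈ R := fun i =>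
      (mem_span_range_iff_exists_fun ℝ).2 ⟨T i, (hrow T i).symm⟩
    have hrli : LinearIndependent ℝ r := by
      have hTrows : LinearIndependent ℝ (fun i => T i) :=
        Matrix.linearIndependent_rows_iff_isUnit.2 hTunit
      have h1 := hTrows.map' L.vecMulLinear hker
      have heq2 : (⇑L.vecMulLinear ∘ fun i => T i) = r := by
        funext i; rw [Function.comp_apply, hvecrow]
      rwa [heq2] at h1
    choose c hc0 hcr using fun i => hgen (r i) (hrR i) (fun j => hTnn i j)
    set U : Fin m → Set (Fin n → ℝ) := fun i => {x | x ∈ F ∧ c i x ≠ 0} with hU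
    have hrspan : ∀ i, r i ∈ Submodule.span ℝ (U i) := by
      intro i
      rw [hcr i, ← Finset.sum_filter_of_ne (p := fun x => c i x ≠ 0)
        (fun x _ h h0 => h (by rw [h0, zero_smul]))]
      exact Submodule.sum_mem _ fun e he =>
        Submodule.smul_mem _ _ (Submodule.subset_span
          ⟨(Finset.mem_filter.1 he).1, (Finset.mem_filter.1 he).2⟩)
    have hrq : LinearIndependent ℝ (fun i => (⊥ : Submodule ℝ (Fin n → ℝ)).mkQ (r i)) :=
      hrli.map' _ (Submodule.ker_mkQ ⊥)
    obtain ⟨e, heU, hemkq⟩ := transversal m ⊥ r U hrq hrspan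
    have heli : LinearIndependent ℝ e :=
      LinearIndependent.of_comp (⊥ : Submodule ℝ (Fin n → ℝ)).mkQ hemkq
    have heinj : Function.Injective e := heli.injective
    refine ⟨Finset.image e Finset.univ, ?_, ?_, ?_, ?_⟩
    · intro x hx
      obtain ⟨i, _, rfl⟩ := Finset.mem_image.1 hx
      exact (heU i).1
    · have hScoe : (↑(Finset.image e Finset.univ) : Set (Fin n → ℝ)) = Set.range e := by simp
      rw [hScoe]; exact (linearIndepOn_id_range_iff heinj).2 heli
    · rw [Finset.card_image_of_injective _ heinj, Finset.card_univ, Fintype.card_fin]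
    · have hbound : ∀ i, l0Vec (e i) ≤ l0Vec (r i) := by
        intro i
        apply l0Vec_mono
        intro j hj
        have heF := (heU i).1
        have hepos : 0 < e i j := lt_of_le_of_ne ((hFC _ heF).2 j) (Ne.symm hj)
        have hcpos : 0 < c i (e i) := lt_of_le_of_ne (hc0 i (e i)) (Ne.symm (heU i).2)
        have hsum : r i j = ∑ x ∈ F, c i x * x j := by
          rw [hcr i]; simp [Finset.sum_apply]
        have hle : c i (e i) * e i j ≤ r i j := by
          rw [hsum]
          exact Finset.single_le_sum
            (fun x hx => mul_nonneg (hc0 i x) ((hFC x hx).2 j)) heF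
        have : 0 < r i j := lt_of_lt_of_le (mul_pos hcpos hepos) hle
        exact ne_of_gt this
      rw [Finset.sum_image (fun a _ b _ h => heinj h), l0Mat_eq_sum]
      exact Finset.sum_le_sum fun i _ => hbound i
  -- Assemble
  refine ⟨sInf {k : ℕ | ∃ S : Finset (Fin n → ℝ), S ⊆ F ∧
      LinearIndependent ℝ (fun x : (S : Set (Fin n → ℝ)) => (x : Fin n → ℝ)) ∧
      S.card = m ∧ ∑ e ∈ S, l0Vec e = k}, ⟨?_, ?_⟩,
    Nat.sInf_mem h2ne, fun k hk => Nat.sInf_le hk⟩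
  · obtain ⟨S, hSF, hSli, hScard, hsum⟩ := Nat.sInf_mem h2ne
    obtain ⟨T, hTunit, hTnn, hTl0⟩ := partB S hSF hSli hScard
    exact ⟨T, hTunit, hTnn, hTl0.trans hsum⟩
  · rintro k ⟨T, hTunit, hTnn, rfl⟩
    obtain ⟨S, hSF, hSli, hScard, hle⟩ := partC T hTunit hTnn
    exact le_trans (Nat.sInf_le ⟨S, hSF, hSli, hScard, rfl⟩) hle
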